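/- Let G be a topological group and (a_n) an injective sequence in G, with A = {a_n : n ∈ ω}. Let φ : A → Finset(A) satisfy a_n ∈ φ(a_n) for all n and {a_m : a_n ∈ φ(a_m)} finite for all n, and suppose every injective sequence in K = ∪_n φ(a_n)·a_n⁻¹ converges to the identity of G. Then K is contained in a compact subset of G and φ(a_n) ⊆ K·a_n for all n. -/

import Mathlib

open Set Pointwise Filter Topology

/-- Ball of radius `E` around `x`. -/
def cball {X : Type*} (E : Set (X × X)) (x : X) : Set X := {y | (x, y) ∈ E}

/-- Ball of radius `E` around a set `A`. -/
def cballSet {X : Type*} (E : Set (X × X)) (A : Set X) : Set X := ⋃ a ∈ A, cball E a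

/-- The condition on `φ : ω → [ω]^{<ω}` defining the family `Φ`. -/
def IsPhi (φ : ℕ → Finset ℕ) : Prop := (∀ n, n ∈ φ n) ∧ ∀ n, {m | n ∈ φ m}.Finite

/-- The coarse structure `F` on `ω`. -/
def Ffam : Set (Set (ℕ × ℕ)) :=
  {E | ∃ φ : ℕ → Finset ℕ, IsPhi φ ∧ E ⊆ {p : ℕ × ℕ | p.2 ∈ φ p.1}}

/-- `K` is precompact and `φ(a_n) ⊆ K · a_n`. -/
theorem K_precompact {G : Type*} [Group G] [TopologicalSpace G] [IsTopologicalGroup G]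
    [T2Space G] (a : ℕ → G) (ha : Function.Injective a) (φ : ℕ → Finset G)
    (hsub : ∀ n, (φ n : Set G) ⊆ Set.range a)
    (hmem : ∀ n, a n ∈ φ n) (hfin : ∀ n, {m | a n ∈ φ m}.Finite)
    (K : Set G) (hK : K = ⋃ n, (φ n : Set G) * {(a n)⁻¹})
    (hconv : ∀ s : ℕ → G, Function.Injective s → (∀ n, s n ∈ K) →
      Tendsto s atTop (𝓝 1)) :
    (∃ C : Set G, IsCompact C ∧ K ⊆ C) ∧ ∀ n, (φ n : Set G) ⊆ K * {a n} := by
  classical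
  constructor
  · refine ⟨insert 1 K, ?_, Set.subset_insert 1 K⟩
    refine isCompact_of_finite_subcover ?_
    intro ι U hUopen hcover
    obtain ⟨i₀, hi₀⟩ : ∃ i, (1 : G) ∈ U i := by
      simpa using hcover (Set.mem_insert 1 K)
    have hfinKU : (K \ U i₀).Finite := by
      by_contra h
      have hinf : (K \ U i₀).Infinite := h
      set f := hinf.natEmbedding with hf
      have hs : Tendsto (fun n => (f n : G)) atTop (𝓝 1) :=
        hconv _ (fun m n hmn => f.injective (Subtype.val_injective hmn))
          (fun n => (f n).2.1)
      have hev : ∀ᶠ n in atTop, (f n : G) ∈ U i₀ :=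
        hs.eventually_mem ((hUopen i₀).mem_nhds hi₀)
      obtain ⟨n, hn⟩ := hev.exists
      exact (f n).2.2 hn
    have hchoice : ∀ x : hfinKU.toFinset, ∃ i, (x : G) ∈ U i := by
      rintro ⟨x, hx⟩
      rw [Set.Finite.mem_toFinset] at hx
      exact Set.mem_iUnion.1 (hcover (Set.mem_insert_of_mem _ hx.1))
    choose g hg using hchoice
    refine ⟨insert i₀ (Finset.univ.image g), fun x hx => ?_⟩
    rcases hx with rfl | hxK
    · exact Set.mem_biUnion (Finset.mem_insert_self _ _) hi₀
    · by_cases hxU : x ∈ U i₀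
      · exact Set.mem_biUnion (Finset.mem_insert_self _ _) hxU
      · have hx' : x ∈ hfinKU.toFinset := by
          rw [Set.Finite.mem_toFinset]; exact ⟨hxK, hxU⟩
        exact Set.mem_biUnion
          (Finset.mem_insert_of_mem (Finset.mem_image_of_mem g (Finset.mem_univ ⟨x, hx'⟩)))
          (hg ⟨x, hx'⟩)
  · intro n x hx
    have hxK : x * (a n)⁻¹ ∈ K := by
      rw [hK]
      exact Set.mem_iUnion.2 ⟨n, Set.mul_mem_mul hx rfl⟩
    have : (x * (a n)⁻¹) * a n ∈ K * {a n} := Set.mul_mem_mul hxK rfl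
    simpa using this
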